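/- Let d ≥ 1, α ∈ (0,2), c₀ > 0 and t > 0. Let μ be a probability measure on ℝ^d with a density p with respect to Lebesgue measure satisfying p(z) ≥ c₀ min( t^{−d/α} , t |z|^{−d−α} ) for all z ≠ 0. Then there exists a constant c > 0 depending only on c₀, d and α such that for all x, y ∈ ℝ^d with x_i < y_i for every coordinate i and with t ≥ max_{1≤i≤d} (y_i − x_i)^α: ‖(μ ∗ δ_x) − (μ ∗ δ_y)‖_var ≥ c |y − x| t^{−1/α}. (This shows the upper bound C|x−y| t^{−1/α} for rotationally invariant α-stable processes is sharp, since their transition densities satisfy the stated two-sided bound.) -/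

import Mathlib

open MeasureTheory Real Set Filter
open scoped RealInnerProductSpace ENNReal

/-- Total variation distance (total variation norm of the signed measure `μ - ν`)
for finite measures, valued in `ℝ≥0∞`. -/
noncomputable def tvDist {E : Type*} [MeasurableSpace E] (μ ν : Measure E) : ℝ≥0∞ :=
  (⨆ (A : Set E) (_ : MeasurableSet A), μ A - ν A) +
    (⨆ (A : Set E) (_ : MeasurableSet A), ν A - μ A)

theorem statement11 (d : ℕ) (hd : 1 ≤ d) (α : ℝ) (hα : 0 < α) (hα2 : α < 2)
    (c₀ : ℝ) (hc₀ : 0 < c₀) :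
    ∃ c : ℝ, 0 < c ∧ ∀ t : ℝ, 0 < t →
      ∀ (μ : Measure (EuclideanSpace ℝ (Fin d))) (p : EuclideanSpace ℝ (Fin d) → ℝ),
        IsProbabilityMeasure μ →
        μ = volume.withDensity (fun z => ENNReal.ofReal (p z)) →
        (∀ z : EuclideanSpace ℝ (Fin d), z ≠ 0 →
          c₀ * min (t ^ (-(d : ℝ) / α)) (t * ‖z‖ ^ (-(d : ℝ) - α)) ≤ p z) →
        ∀ x y : EuclideanSpace ℝ (Fin d),
          (∀ i, x i < y i) → (∀ i, (y i - x i) ^ α ≤ t) →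
          ENNReal.ofReal (c * ‖y - x‖ * t ^ (-(1 / α))) ≤
            tvDist (μ.map (· + x)) (μ.map (· + y)) := by
  classical
  set sd : ℝ := Real.sqrt d with hsd_def
  have hsd1 : 1 ≤ sd := by
    rw [show (1:ℝ) = Real.sqrt 1 by simp]
    exact Real.sqrt_le_sqrt (by exact_mod_cast hd)
  have hsd0 : 0 < sd := lt_of_lt_of_le one_pos hsd1
  refine ⟨c₀ / sd ^ (d + 1), by positivity, ?_⟩
  intro t ht μ p hprob hμ hp x y hxy hts
  have hmeasi : ∀ i : Fin d, Measurable fun z : EuclideanSpace ℝ (Fin d) => z i :=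
    fun i => (measurable_pi_apply i).comp (MeasurableEquiv.toLp 2 (Fin d → ℝ)).symm.measurable
  obtain ⟨i, -, hi_max⟩ := Finset.exists_max_image (Finset.univ : Finset (Fin d))
      (fun j => y j - x j) ⟨⟨0, hd⟩, Finset.mem_univ _⟩
  set h0 : ℝ := y i - x i with hh0
  have hipos : 0 < h0 := sub_pos.mpr (hxy i)
  set r : ℝ := t ^ (1/α) with hr_def
  have hr0 : 0 < r := Real.rpow_pos_of_pos ht _
  have hir : h0 ≤ r := by
    have h1 : (h0 ^ α) ^ (1/α) ≤ t ^ (1/α) :=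
      Real.rpow_le_rpow (Real.rpow_nonneg hipos.le _) (hts i) (by positivity)
    rwa [← Real.rpow_mul hipos.le, mul_one_div, div_self hα.ne', Real.rpow_one] at h1
  set s : ℝ := r / sd with hs_def
  have hs0 : 0 < s := div_pos hr0 hsd0
  set m : ℝ := min h0 s with hm_def
  have hm0 : 0 < m := lt_min hipos hs0
  have hm_le : h0 / sd ≤ m := by
    rcases le_total h0 s with hc | hc
    · rw [hm_def, min_eq_left hc]
      exact div_le_self hipos.le hsd1
    · rw [hm_def, min_eq_right hc, hs_def]
      gcongr
  -- the box
  set I : Fin d → Set ℝ := fun j => if j = i then Ioo (-m) 0 else Ioo 0 s with hI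
  set B : Set (EuclideanSpace ℝ (Fin d)) :=
    (MeasurableEquiv.toLp 2 (Fin d → ℝ)).symm ⁻¹' (Set.univ.pi I) with hB
  have hImeas : ∀ j, MeasurableSet (I j) := fun j => by
    by_cases hj : j = i <;> simp [hI, hj]
  have hBmeas : MeasurableSet B :=
    (MeasurableEquiv.toLp 2 (Fin d → ℝ)).symm.measurable (MeasurableSet.univ_pi hImeas)
  have hBmem : ∀ z : EuclideanSpace ℝ (Fin d), z ∈ B ↔ ∀ j, z j ∈ I j := fun z =>
    Set.mem_univ_pi
  -- key properties of points in B
  have hBi : ∀ z ∈ B, z i ∈ Ioo (-m) 0 := by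
    intro z hz
    simpa [hI] using (hBmem z).1 hz i
  have hBabs : ∀ z ∈ B, ∀ j, |z j| ≤ s := by
    intro z hz j
    have hj := (hBmem z).1 hz j
    simp only [hI] at hj
    by_cases hji : j = i
    · rw [if_pos hji] at hj
      have hms : m ≤ s := min_le_right _ _
      rw [abs_le]; constructor <;> [linarith [hj.1]; linarith [hj.2]]
    · rw [if_neg hji] at hj
      rw [abs_le]; constructor <;> [linarith [hj.1]; linarith [hj.2]]
  have hBnorm : ∀ z ∈ B, ‖z‖ ≤ r := by
    intro z hz
    rw [EuclideanSpace.norm_eq]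
    have hsum : (∑ j, ‖z j‖ ^ 2) ≤ (d : ℝ) * s ^ 2 := by
      have hle : ∀ j ∈ Finset.univ, ‖z j‖ ^ 2 ≤ s ^ 2 := by
        intro j _
        rw [Real.norm_eq_abs]
        have h3 := hBabs z hz j
        nlinarith [abs_nonneg (z j)]
      calc (∑ j, ‖z j‖ ^ 2) ≤ ∑ _j : Fin d, s ^ 2 := Finset.sum_le_sum hle
        _ = (d : ℝ) * s ^ 2 := by
            rw [Finset.sum_const, Finset.card_univ, Fintype.card_fin, nsmul_eq_mul]
    have h4 : Real.sqrt ((d:ℝ) * s ^ 2) = sd * s := by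
      rw [Real.sqrt_mul (by positivity), Real.sqrt_sq hs0.le]
    have h5 : sd * s = r := by rw [hs_def, mul_div_cancel₀ _ hsd0.ne']
    calc Real.sqrt (∑ j, ‖z j‖ ^ 2) ≤ Real.sqrt ((d : ℝ) * s ^ 2) := Real.sqrt_le_sqrt hsum
      _ = r := by rw [h4, h5]
  -- density bound on B
  have hpB : ∀ z ∈ B, ENNReal.ofReal (c₀ * t ^ (-(d:ℝ)/α)) ≤ ENNReal.ofReal (p z) := by
    intro z hz
    apply ENNReal.ofReal_le_ofReal
    have hzi := hBi z hz
    have hzne : z ≠ 0 := by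
      intro hzz
      rw [hzz] at hzi
      simpa using hzi.2
    have hznorm : 0 < ‖z‖ := norm_pos_iff.mpr hzne
    have hzr : ‖z‖ ≤ r := hBnorm z hz
    have h2 : t ^ (-(d:ℝ)/α) ≤ t * ‖z‖ ^ (-(d:ℝ) - α) := by
      have hmono : r ^ (-(d:ℝ) - α) ≤ ‖z‖ ^ (-(d:ℝ) - α) :=
        Real.rpow_le_rpow_of_nonpos hznorm hzr (by
          have hdnn : (0:ℝ) ≤ (d:ℝ) := Nat.cast_nonneg d
          linarith)
      have heq : t * r ^ (-(d:ℝ) - α) = t ^ (-(d:ℝ)/α) := by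
        rw [hr_def, ← Real.rpow_mul ht.le,
          show t * t ^ (1/α * (-(d:ℝ) - α)) = t ^ (1:ℝ) * t ^ (1/α * (-(d:ℝ) - α)) by
            rw [Real.rpow_one],
          ← Real.rpow_add ht]
        congr 1
        field_simp
        ring
      calc t ^ (-(d:ℝ)/α) = t * r ^ (-(d:ℝ) - α) := heq.symm
        _ ≤ t * ‖z‖ ^ (-(d:ℝ) - α) := by
            exact mul_le_mul_of_nonneg_left hmono ht.le
    calc c₀ * t ^ (-(d:ℝ)/α)
        ≤ c₀ * min (t ^ (-(d : ℝ) / α)) (t * ‖z‖ ^ (-(d : ℝ) - α)) := by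
          have : t ^ (-(d:ℝ)/α) ≤ min (t ^ (-(d : ℝ) / α)) (t * ‖z‖ ^ (-(d : ℝ) - α)) :=
            le_min le_rfl h2
          exact mul_le_mul_of_nonneg_left this hc₀.le
      _ ≤ p z := hp z hzne
  -- volume of the box
  have hvolB : volume B = ENNReal.ofReal m * ENNReal.ofReal s ^ (d - 1) := by
    rw [hB, (EuclideanSpace.volume_preserving_symm_measurableEquiv_toLp (Fin d)).measure_preimage
      (MeasurableSet.univ_pi hImeas).nullMeasurableSet, volume_pi_pi]
    rw [← Finset.prod_erase_mul _ _ (Finset.mem_univ i)]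
    have h1 : ∀ j ∈ Finset.univ.erase i, volume (I j) = ENNReal.ofReal s := by
      intro j hj
      simp only [hI, if_neg (Finset.ne_of_mem_erase hj)]
      rw [Real.volume_Ioo, sub_zero]
    rw [Finset.prod_congr rfl h1, Finset.prod_const,
      Finset.card_erase_of_mem (Finset.mem_univ i), Finset.card_univ, Fintype.card_fin]
    simp only [hI, if_pos rfl, Real.volume_Ioo, zero_sub, neg_neg, sub_neg_eq_add, zero_add]
    ring
  -- measure lower bound on B
  have hμB : ENNReal.ofReal (c₀ * t ^ (-(d:ℝ)/α)) * volume B ≤ μ B := by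
    rw [hμ, withDensity_apply _ hBmeas]
    calc ENNReal.ofReal (c₀ * t ^ (-(d:ℝ)/α)) * volume B
        = ∫⁻ _z in B, ENNReal.ofReal (c₀ * t ^ (-(d:ℝ)/α)) ∂volume :=
          (setLIntegral_const _ _).symm
      _ ≤ ∫⁻ z in B, ENNReal.ofReal (p z) ∂volume :=
          lintegral_mono_ae ((ae_restrict_iff' hBmeas).mpr (ae_of_all _ hpB))
  -- the half-space sets
  set S1 : Set (EuclideanSpace ℝ (Fin d)) := {w | w i ≤ 0} with hS1
  set S2 : Set (EuclideanSpace ℝ (Fin d)) := {w | w i ≤ x i - y i} with hS2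
  have hS1m : MeasurableSet S1 := measurableSet_le (hmeasi i) measurable_const
  have hS2m : MeasurableSet S2 := measurableSet_le (hmeasi i) measurable_const
  have hsub : S2 ⊆ S1 := fun w hw => by
    have : w i ≤ x i - y i := hw
    have h2 : x i - y i ≤ 0 := by linarith [hxy i]
    exact le_trans this h2
  have hBS : B ⊆ S1 \ S2 := by
    intro z hz
    have hzi := hBi z hz
    have hms : m ≤ h0 := min_le_left _ _
    constructor
    · exact hzi.2.le
    · intro hc
      have : z i ≤ x i - y i := hc
      have h3 : -m < z i := hzi.1
      rw [hh0] at hms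
      linarith
  have hμdiff : μ (S1 \ S2) = μ S1 - μ S2 :=
    measure_diff hsub hS2m.nullMeasurableSet (measure_ne_top μ S2)
  -- the test set and the image measures
  set Aset : Set (EuclideanSpace ℝ (Fin d)) := {z | z i ≤ x i} with hAset
  have hAm : MeasurableSet Aset := measurableSet_le (hmeasi i) measurable_const
  have hmapx : (μ.map (· + x)) Aset = μ S1 := by
    rw [Measure.map_apply (measurable_add_const x) hAm]
    congr 1
    ext w
    simp only [Set.mem_preimage, hAset, Set.mem_setOf_eq, hS1, PiLp.add_apply]
    constructor <;> intro hw <;> linarith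
  have hmapy : (μ.map (· + y)) Aset = μ S2 := by
    rw [Measure.map_apply (measurable_add_const y) hAm]
    congr 1
    ext w
    simp only [Set.mem_preimage, hAset, Set.mem_setOf_eq, hS2, PiLp.add_apply]
    constructor <;> intro hw <;> linarith
  -- the norm bound
  have hnorm : ‖y - x‖ ≤ sd * h0 := by
    rw [EuclideanSpace.norm_eq]
    have hsum : (∑ j, ‖(y - x) j‖ ^ 2) ≤ (d : ℝ) * h0 ^ 2 := by
      calc (∑ j, ‖(y - x) j‖ ^ 2) ≤ ∑ _j : Fin d, h0 ^ 2 := by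
            refine Finset.sum_le_sum fun j _ => ?_
            have hsub' : (y - x) j = y j - x j := by simp [PiLp.sub_apply]
            rw [hsub', Real.norm_eq_abs, abs_of_pos (sub_pos.mpr (hxy j))]
            have h2 : y j - x j ≤ h0 := hi_max j (Finset.mem_univ j)
            exact pow_le_pow_left₀ (le_of_lt (sub_pos.mpr (hxy j))) h2 2
        _ = (d : ℝ) * h0 ^ 2 := by
            rw [Finset.sum_const, Finset.card_univ, Fintype.card_fin, nsmul_eq_mul]
    calc Real.sqrt (∑ j, ‖(y - x) j‖ ^ 2) ≤ Real.sqrt ((d : ℝ) * h0 ^ 2) :=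
          Real.sqrt_le_sqrt hsum
      _ = sd * h0 := by rw [Real.sqrt_mul (by positivity), Real.sqrt_sq hipos.le]
  -- exponent identity
  have hTr : t ^ (-(d:ℝ)/α) * r ^ (d-1) = t ^ (-(1/α)) := by
    rw [hr_def, ← Real.rpow_natCast (t ^ (1/α)) (d-1), ← Real.rpow_mul ht.le,
      ← Real.rpow_add ht]
    congr 1
    rw [Nat.cast_sub hd, Nat.cast_one]
    field_simp
    ring
  -- the real inequality
  have hreal : c₀ / sd ^ (d+1) * ‖y - x‖ * t ^ (-(1/α)) ≤
      c₀ * t ^ (-(d:ℝ)/α) * (m * s ^ (d-1)) := by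
    have hT : 0 < t ^ (-(1/α)) := Real.rpow_pos_of_pos ht _
    have e1 : s ^ (d-1) = r ^ (d-1) / sd ^ (d-1) := div_pow r sd (d-1)
    have e2 : c₀ * t ^ (-(d:ℝ)/α) * (m * s ^ (d-1)) =
        c₀ * t ^ (-(1/α)) * m / sd ^ (d-1) := by
      rw [e1, ← hTr]; ring
    rw [e2]
    have epow : sd ^ (d+1) = sd ^ (d-1) * sd * sd := by
      rw [← pow_succ, ← pow_succ]
      congr 1
      omega
    have step1 : c₀ / sd ^ (d+1) * ‖y - x‖ * t ^ (-(1/α)) ≤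
        c₀ / sd ^ (d+1) * (sd * h0) * t ^ (-(1/α)) := by
      gcongr
    have e3 : c₀ / sd ^ (d+1) * (sd * h0) * t ^ (-(1/α)) =
        c₀ * t ^ (-(1/α)) * (h0 / sd) / sd ^ (d-1) := by
      rw [epow]
      field_simp
    have step2 : c₀ * t ^ (-(1/α)) * (h0 / sd) / sd ^ (d-1) ≤
        c₀ * t ^ (-(1/α)) * m / sd ^ (d-1) := by
      gcongr
    calc c₀ / sd ^ (d+1) * ‖y - x‖ * t ^ (-(1/α))
        ≤ c₀ / sd ^ (d+1) * (sd * h0) * t ^ (-(1/α)) := step1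
      _ = c₀ * t ^ (-(1/α)) * (h0 / sd) / sd ^ (d-1) := e3
      _ ≤ c₀ * t ^ (-(1/α)) * m / sd ^ (d-1) := step2
  -- final assembly
  calc ENNReal.ofReal (c₀ / sd ^ (d+1) * ‖y - x‖ * t ^ (-(1/α)))
      ≤ ENNReal.ofReal (c₀ * t ^ (-(d:ℝ)/α) * (m * s ^ (d-1))) :=
        ENNReal.ofReal_le_ofReal hreal
    _ = ENNReal.ofReal (c₀ * t ^ (-(d:ℝ)/α)) * volume B := by
        rw [hvolB, ENNReal.ofReal_mul (by positivity), ENNReal.ofReal_mul hm0.le,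
          ENNReal.ofReal_pow hs0.le]
    _ ≤ μ B := hμB
    _ ≤ μ (S1 \ S2) := measure_mono hBS
    _ = μ S1 - μ S2 := hμdiff
    _ = (μ.map (· + x)) Aset - (μ.map (· + y)) Aset := by rw [hmapx, hmapy]
    _ ≤ ⨆ (A : Set (EuclideanSpace ℝ (Fin d))) (_ : MeasurableSet A),
          (μ.map (· + x)) A - (μ.map (· + y)) A := le_iSup₂_of_le Aset hAm le_rfl
    _ ≤ tvDist (μ.map (· + x)) (μ.map (· + y)) := by
        unfold tvDist
        exact le_self_add
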